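/- Let s ∈ ℂ with Re(s) > 1, and let r ∈ ℂ be either real or purely imaginary with |r| ≤ 1/2. Then 2∫₀^∞ cos(ur) g_s(u) du = (2^{s−1} √π / Γ(s)) · Γ((s − 1/2 − ir)/2) · Γ((s − 1/2 + ir)/2), where g_s(u) := 2^{1/2} √π (Γ(s − 1/2)/Γ(s)) cosh(u)^{−(s−1/2)}. In other words, g_s has Selberg/Harish-Chandra transform h_s(r) = (2^{s−1}√π/Γ(s)) Γ((s−1/2−ir)/2) Γ((s−1/2+ir)/2). -/

import Mathlib

open MeasureTheory Set
open Complex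

/-- The test function `g_s(u) = 2^{1/2} √π (Γ(s-1/2)/Γ(s)) cosh(u)^{-(s-1/2)}`. -/
noncomputable def gTest (s : ℂ) (u : ℝ) : ℂ :=
  (2 : ℂ) ^ ((1 / 2 : ℂ)) * (Real.sqrt Real.pi : ℂ) *
    (Complex.Gamma (s - 1 / 2) / Complex.Gamma s) *
      ((Real.cosh u : ℂ) ^ (-(s - 1 / 2)))


lemma cpow_posreal (x : ℝ) (hx : 0 < x) (w : ℂ) :
    (x : ℂ) ^ w = Complex.exp (w * Real.log x) := by
  rw [Complex.cpow_def_of_ne_zero (by exact_mod_cast hx.ne'), ← Complex.ofReal_log hx.le,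
    mul_comm]

noncomputable def phi (t : ℝ) : ℝ := (Real.log t - Real.log (1 - t)) / 2

lemma phi_pos_of_mem {t : ℝ} (ht : t ∈ Ioo (1/2 : ℝ) 1) : 0 < phi t := by
  obtain ⟨h1, h2⟩ := ht
  have h0 : (0:ℝ) < 1 - t := by linarith
  have : Real.log (1 - t) < Real.log t := Real.log_lt_log h0 (by linarith)
  unfold phi; linarith

lemma phi_image : phi '' Ioo (1/2 : ℝ) 1 = Ioi (0:ℝ) := by
  ext y
  constructor
  · rintro ⟨t, ht, rfl⟩
    exact phi_pos_of_mem ht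
  · intro hy
    have hy' : (0:ℝ) < y := hy
    have hE : (0:ℝ) < Real.exp (-(2*y)) := Real.exp_pos _
    have hE1 : Real.exp (-(2*y)) < 1 := by
      rw [Real.exp_lt_one_iff]; linarith
    refine ⟨1 / (1 + Real.exp (-(2*y))), ⟨?_, ?_⟩, ?_⟩
    · rw [div_lt_div_iff₀ (by norm_num) (by linarith)]
      linarith
    · rw [div_lt_one (by linarith)]; linarith
    · have ht0 : (0:ℝ) < 1 / (1 + Real.exp (-(2*y))) := by positivity
      have h1t : 1 - 1 / (1 + Real.exp (-(2*y))) = Real.exp (-(2*y)) / (1 + Real.exp (-(2*y))) := by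
        field_simp
        ring
      unfold phi
      rw [h1t, Real.log_div (by positivity) (by positivity),
        Real.log_div (by positivity) (by positivity), Real.log_exp]
      simp only [Real.log_one]; ring

lemma phi_injOn : InjOn phi (Ioo (1/2 : ℝ) 1) := by
  intro t1 h1 t2 h2 h
  have h10 : (0:ℝ) < t1 := lt_trans (by norm_num) h1.1
  have h20 : (0:ℝ) < t2 := lt_trans (by norm_num) h2.1
  have h11 : (0:ℝ) < 1 - t1 := by linarith [h1.2]
  have h21 : (0:ℝ) < 1 - t2 := by linarith [h2.2]
  have : Real.exp (Real.log t1 - Real.log (1 - t1))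
      = Real.exp (Real.log t2 - Real.log (1 - t2)) := by
    unfold phi at h
    congr 1; linarith
  rw [Real.exp_sub, Real.exp_sub, Real.exp_log h10, Real.exp_log h20,
    Real.exp_log h11, Real.exp_log h21] at this
  field_simp at this
  nlinarith

lemma phi_hasDeriv {t : ℝ} (ht : t ∈ Ioo (1/2 : ℝ) 1) :
    HasDerivWithinAt phi (1 / (2 * t * (1 - t))) (Ioo (1/2 : ℝ) 1) t := by
  have h10 : (0:ℝ) < t := lt_trans (by norm_num) ht.1
  have h11 : (0:ℝ) < 1 - t := by linarith [ht.2]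
  have hd1 : HasDerivAt (fun x : ℝ => Real.log x) t⁻¹ t := Real.hasDerivAt_log h10.ne'
  have hd2 : HasDerivAt (fun x : ℝ => Real.log (1 - x)) ((1 - t)⁻¹ * (-1)) t := by
    exact (Real.hasDerivAt_log h11.ne').comp t ((hasDerivAt_id t).const_sub 1)
  have := ((hd1.sub hd2).div_const 2).hasDerivWithinAt (s := Ioo (1/2 : ℝ) 1)
  refine this.congr_deriv ?_
  field_simp
  ring

lemma cosh_phi {t : ℝ} (ht0 : 0 < t) (ht1 : t < 1) :
    Real.cosh (phi t) = (2 * Real.sqrt t * Real.sqrt (1 - t))⁻¹ := by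
  have h1t : (0:ℝ) < 1 - t := by linarith
  set A := Real.sqrt t with hA
  set B := Real.sqrt (1 - t) with hB
  have hApos : 0 < A := Real.sqrt_pos.mpr ht0
  have hBpos : 0 < B := Real.sqrt_pos.mpr h1t
  have hA2 : A ^ 2 = t := Real.sq_sqrt ht0.le
  have hB2 : B ^ 2 = 1 - t := Real.sq_sqrt h1t.le
  have he1 : Real.exp (phi t) = A / B := by
    unfold phi
    rw [show (Real.log t - Real.log (1 - t)) / 2
        = Real.log t / 2 - Real.log (1 - t) / 2 by ring,
      Real.exp_sub, ← Real.log_sqrt ht0.le, ← Real.log_sqrt h1t.le,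
      Real.exp_log hApos, Real.exp_log hBpos]
  have he2 : Real.exp (-phi t) = B / A := by
    rw [Real.exp_neg, he1]
    field_simp
  have hsum : A * A + B * B = 1 := by nlinarith [hA2, hB2]
  rw [Real.cosh_eq, he1, he2]
  field_simp
  linear_combination hsum

lemma exp_two_key {E F : ℂ} (h : E = F + (Real.log 2 : ℂ)) :
    Complex.exp E = 2 * Complex.exp F := by
  rw [h, Complex.exp_add, ← Complex.ofReal_exp, Real.exp_log two_pos, mul_comm]
  norm_num

lemma exp_combine (c x d g a1 a2 a3 a4 : ℂ)
    (h1 : c + x + d = g + (a1 + a2) + (Real.log 2 : ℂ))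
    (h2 : c + -x + d = g + (a3 + a4) + (Real.log 2 : ℂ)) :
    Complex.exp c * ((Complex.exp x + Complex.exp (-x)) / 2 * Complex.exp d)
      = Complex.exp g * (Complex.exp a1 * Complex.exp a2 + Complex.exp a3 * Complex.exp a4) := by
  have k1 : Complex.exp (c + x + d) = 2 * Complex.exp (g + (a1 + a2)) := exp_two_key h1
  have k2 : Complex.exp (c + -x + d) = 2 * Complex.exp (g + (a3 + a4)) := exp_two_key h2
  simp only [Complex.exp_add] at k1 k2
  linear_combination k1 / 2 + k2 / 2

lemma pointwise (p q : ℂ) {t : ℝ} (ht : t ∈ Ioo (1/2 : ℝ) 1) :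
    |1 / (2 * t * (1 - t))| •
      ((Complex.exp ((phi t : ℂ) * (p - q)) + Complex.exp (-((phi t : ℂ) * (p - q)))) / 2 *
        ((Real.cosh (phi t) : ℂ)) ^ (-(p + q)))
    = (2:ℂ) ^ (p + q - 2) *
        ((t:ℂ) ^ (p - 1) * (1 - (t:ℂ)) ^ (q - 1) + (t:ℂ) ^ (q - 1) * (1 - (t:ℂ)) ^ (p - 1)) := by
  have ht0 : (0:ℝ) < t := lt_trans (by norm_num) ht.1
  have ht1 : t < 1 := ht.2
  have h1t : (0:ℝ) < 1 - t := by linarith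
  set L := Real.log t with hL
  set M := Real.log (1 - t) with hM
  -- coefficient
  have hcpos : (0:ℝ) < 1 / (2 * t * (1 - t)) := by positivity
  have habs : |1 / (2 * t * (1 - t))| = 1 / (2 * t * (1 - t)) := abs_of_pos hcpos
  have hlogc : Real.log (1 / (2 * t * (1 - t))) = -(Real.log 2 + L + M) := by
    rw [one_div, Real.log_inv, Real.log_mul (by positivity) h1t.ne',
      Real.log_mul (by norm_num) ht0.ne']
  have hcoef : ((1 / (2 * t * (1 - t)) : ℝ) : ℂ)
      = Complex.exp ((-(Real.log 2 + L + M) : ℝ) : ℂ) := by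
    rw [← hlogc, ← Complex.ofReal_exp, Real.exp_log hcpos]
  -- cosh factor
  have hcoshpos : (0:ℝ) < Real.cosh (phi t) := Real.cosh_pos _
  have hlogcosh : Real.log (Real.cosh (phi t)) = -(Real.log 2 + (L + M) / 2) := by
    rw [cosh_phi ht0 ht1, Real.log_inv,
      Real.log_mul (by positivity) (Real.sqrt_pos.mpr h1t).ne',
      Real.log_mul (by norm_num) (Real.sqrt_pos.mpr ht0).ne',
      Real.log_sqrt ht0.le, Real.log_sqrt h1t.le]
    ring
  have hcosh : ((Real.cosh (phi t) : ℝ) : ℂ) ^ (-(p + q))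
      = Complex.exp (-(p + q) * ((-(Real.log 2 + (L + M) / 2) : ℝ) : ℂ)) := by
    rw [cpow_posreal _ hcoshpos, hlogcosh]
  -- power factors
  have h1tc : (1 - (t:ℂ)) = ((1 - t : ℝ) : ℂ) := by push_cast; ring
  have hph : ((phi t : ℝ) : ℂ) = (((L - M) / 2 : ℝ) : ℂ) := by
    unfold phi; norm_num
    rfl
  have h2c := cpow_posreal 2 two_pos (p + q - 2)
  rw [Complex.ofReal_ofNat] at h2c
  rw [Complex.real_smul, habs, hcoef, hcosh, hph, h1tc,
    cpow_posreal t ht0 (p - 1), cpow_posreal t ht0 (q - 1),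
    cpow_posreal (1 - t) h1t (q - 1), cpow_posreal (1 - t) h1t (p - 1), h2c]
  exact exp_combine _ _ _ _ _ _ _ _ (by push_cast; ring) (by push_cast; ring)

lemma halfline (p q : ℂ) (hp : 0 < p.re) (hq : 0 < q.re) :
    (∫ u in Ioi (0:ℝ),
        (Complex.exp ((u:ℂ) * (p - q)) + Complex.exp (-((u:ℂ) * (p - q)))) / 2 *
          ((Real.cosh u : ℂ)) ^ (-(p + q)))
      = (2:ℂ) ^ (p + q - 2) * Complex.betaIntegral p q := by
  set f : ℝ → ℂ := fun t => (t:ℂ) ^ (p - 1) * (1 - (t:ℂ)) ^ (q - 1) with hf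
  set g : ℝ → ℂ := fun t => (t:ℂ) ^ (q - 1) * (1 - (t:ℂ)) ^ (p - 1) with hg
  -- integrability
  have hfI : IntervalIntegrable f volume 0 1 := Complex.betaIntegral_convergent hp hq
  have hgI : IntervalIntegrable g volume 0 1 := by
    have := Complex.betaIntegral_convergent hq hp
    exact this
  have hfon : IntegrableOn f (Ioc (0:ℝ) 1) :=
    (intervalIntegrable_iff_integrableOn_Ioc_of_le (by norm_num)).mp hfI
  have hgon : IntegrableOn g (Ioc (0:ℝ) 1) :=
    (intervalIntegrable_iff_integrableOn_Ioc_of_le (by norm_num)).mp hgI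
  have hfon2 : IntegrableOn f (Ioo (1/2:ℝ) 1) :=
    hfon.mono_set (fun x hx => ⟨lt_trans (by norm_num) hx.1, hx.2.le⟩)
  have hgon2 : IntegrableOn g (Ioo (1/2:ℝ) 1) :=
    hgon.mono_set (fun x hx => ⟨lt_trans (by norm_num) hx.1, hx.2.le⟩)
  -- substitution u = phi t
  rw [← phi_image, integral_image_eq_integral_abs_deriv_smul measurableSet_Ioo
    (fun t ht => phi_hasDeriv ht) phi_injOn]
  rw [setIntegral_congr_fun measurableSet_Ioo
    (fun t ht => pointwise p q ht)]
  rw [integral_const_mul]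
  congr 1
  rw [integral_add hfon2 hgon2]
  -- second piece: reflect t ↦ 1 - t
  have refl_img : (fun x : ℝ => 1 - x) '' Ioo (0:ℝ) (1/2) = Ioo (1/2:ℝ) 1 := by
    rw [Set.image_const_sub_Ioo]; norm_num
  have hrefl : ∫ t in Ioo (1/2:ℝ) 1, g t = ∫ t in Ioo (0:ℝ) (1/2), f t := by
    have hder : ∀ x ∈ Ioo (0:ℝ) (1/2), HasDerivWithinAt (fun y : ℝ => 1 - y) (-1 : ℝ)
        (Ioo (0:ℝ) (1/2)) x := fun x _ => by
      exact ((hasDerivAt_id x).const_sub 1).hasDerivWithinAt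
    rw [← refl_img, integral_image_eq_integral_abs_deriv_smul measurableSet_Ioo hder
      (fun a _ b _ h => by simp only [sub_right_inj] at h; exact h) g]
    refine setIntegral_congr_fun measurableSet_Ioo (fun t ht => ?_)
    simp only [hf, hg, abs_neg, abs_one, one_smul]
    push_cast
    ring_nf
  rw [hrefl]
  -- combine the two halves into the beta integral
  have hfon1 : IntegrableOn f (Ioc (0:ℝ) (1/2)) :=
    hfon.mono_set (Ioc_subset_Ioc le_rfl (by norm_num))
  have hfon3 : IntegrableOn f (Ioc (1/2:ℝ) 1) :=
    hfon.mono_set (Ioc_subset_Ioc (by norm_num) le_rfl)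
  have hunion : (∫ t in Ioc (0:ℝ) (1/2), f t) + (∫ t in Ioc (1/2:ℝ) 1, f t)
      = ∫ t in Ioc (0:ℝ) 1, f t := by
    rw [← setIntegral_union (Set.Ioc_disjoint_Ioc_of_le le_rfl) measurableSet_Ioc hfon1 hfon3,
      Set.Ioc_union_Ioc_eq_Ioc (by norm_num) (by norm_num)]
  rw [Complex.betaIntegral, intervalIntegral.integral_of_le (by norm_num : (0:ℝ) ≤ 1)]
  rw [← hunion, integral_Ioc_eq_integral_Ioo, integral_Ioc_eq_integral_Ioo]
  exact add_comm _ _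

/-- for `Re(s) > 1` and `r` real, or purely imaginary with `|r| ≤ 1/2`,
the Selberg/Harish-Chandra transform of `g_s` is
`h_s(r) = (2^{s-1}√π/Γ(s)) Γ((s-1/2-ir)/2) Γ((s-1/2+ir)/2)`. -/
theorem statement3 (s : ℂ) (hs : 1 < s.re) (r : ℂ)
    (hr : r.im = 0 ∨ (r.re = 0 ∧ ‖r‖ ≤ 1 / 2)) :
    2 * ∫ u in Set.Ioi (0 : ℝ), Complex.cos (u * r) * gTest s u
      = (2 : ℂ) ^ (s - 1) * (Real.sqrt Real.pi : ℂ) / Complex.Gamma s *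
          (Complex.Gamma ((s - 1 / 2 - Complex.I * r) / 2) *
            Complex.Gamma ((s - 1 / 2 + Complex.I * r) / 2)) := by
  set p : ℂ := (s - 1 / 2 + Complex.I * r) / 2 with hpdef
  set q : ℂ := (s - 1 / 2 - Complex.I * r) / 2 with hqdef
  have him : |r.im| ≤ 1 / 2 := by
    rcases hr with h | ⟨_, h⟩
    · rw [h]; norm_num
    · exact (Complex.abs_im_le_norm r).trans h
  have hIr : (Complex.I * r).re = -r.im := by simp
  have hsre : ((s : ℂ) - 1 / 2).re = s.re - 1 / 2 := by
    norm_num [Complex.sub_re]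
  have hp : 0 < p.re := by
    rw [hpdef, Complex.div_ofNat_re, Complex.add_re, hsre, hIr]
    have h := abs_le.mp him
    have : (0:ℝ) < s.re - 1/2 + -r.im := by linarith [h.1]
    linarith
  have hq : 0 < q.re := by
    rw [hqdef, Complex.div_ofNat_re, Complex.sub_re, hsre, hIr]
    have h := abs_le.mp him
    have : (0:ℝ) < s.re - 1/2 - -r.im := by linarith [h.2]
    linarith
  have hpq : p + q = s - 1 / 2 := by rw [hpdef, hqdef]; ring
  have hpqre : 0 < (p + q).re := by
    rw [Complex.add_re]; linarith
  set K : ℂ := (2 : ℂ) ^ ((1 / 2 : ℂ)) * (Real.sqrt Real.pi : ℂ) *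
    (Complex.Gamma (s - 1 / 2) / Complex.Gamma s) with hK
  have hint : ∀ u : ℝ, Complex.cos (u * r) * gTest s u
      = K * ((Complex.exp ((u:ℂ) * (p - q)) + Complex.exp (-((u:ℂ) * (p - q)))) / 2 *
          ((Real.cosh u : ℂ)) ^ (-(p + q))) := by
    intro u
    have h1 : ((u:ℂ) * r) * Complex.I = (u:ℂ) * (p - q) := by
      rw [hpdef, hqdef]; ring
    have h2 : (-((u:ℂ) * r)) * Complex.I = -((u:ℂ) * (p - q)) := by
      rw [hpdef, hqdef]; ring
    rw [gTest, Complex.cos, h1, h2, hpq, hK]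
    ring
  rw [setIntegral_congr_fun measurableSet_Ioi (fun u _ => hint u), integral_const_mul,
    halfline p q hp hq]
  have hβ : Complex.Gamma p * Complex.Gamma q
      = Complex.Gamma (p + q) * Complex.betaIntegral p q :=
    Complex.Gamma_mul_Gamma_eq_betaIntegral hp hq
  have hΓpq : Complex.Gamma (p + q) ≠ 0 := Complex.Gamma_ne_zero_of_re_pos hpqre
  have hΓs : Complex.Gamma s ≠ 0 := Complex.Gamma_ne_zero_of_re_pos (by linarith)
  have hpow : 2 * ((2:ℂ) ^ ((1/2 : ℂ)) * (2:ℂ) ^ (p + q - 2)) = (2:ℂ) ^ (s - 1) := by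
    rw [← Complex.cpow_add _ _ (two_ne_zero (α := ℂ)),
      show (1/2:ℂ) + (p + q - 2) = (s - 1) - 1 by rw [hpq]; ring,
      Complex.cpow_sub _ _ (two_ne_zero (α := ℂ)), Complex.cpow_one]
    ring
  have hβ' : Complex.betaIntegral p q
      = Complex.Gamma p * Complex.Gamma q / Complex.Gamma (p + q) := by
    rw [eq_div_iff hΓpq, mul_comm, ← hβ]
  rw [hK, hβ', show s - 1/2 = p + q from hpq.symm]
  field_simp
  linear_combination (Complex.Gamma p * Complex.Gamma q) * hpow
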